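/- An involutive functor (F, γ) between inner product categories preserves the inner product (i.e. ⟨F(f)|F(g)⟩ = F(⟨f|g⟩) ⋅ γ_A for all parallel f, g : A → X) if and only if it is a unitary functor (i.e. F(φ_X) ⋅ γ_X = φ_{F(X)} for all X). -/
import Mathlib


open CategoryTheory

universe v u

/-- An (achiral) involutive category: a contravariant endofunctor `(−)†`
together with a natural isomorphism `ι : X → X††` satisfying `ι_{X†} ≫ (ι_X)† = 1`. -/
structure Involutive (C : Type u) [Category.{v} C] where
  dob : C → C
  dmap : ∀ {X Y : C}, (X ⟶ Y) → (dob Y ⟶ dob X)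
  dmap_id : ∀ X : C, dmap (𝟙 X) = 𝟙 (dob X)
  dmap_comp : ∀ {X Y Z : C} (f : X ⟶ Y) (g : Y ⟶ Z), dmap (f ≫ g) = dmap g ≫ dmap f
  ι : ∀ X : C, X ⟶ dob (dob X)
  ιinv : ∀ X : C, dob (dob X) ⟶ X
  ι_hom_inv : ∀ X : C, ι X ≫ ιinv X = 𝟙 X
  ι_inv_hom : ∀ X : C, ιinv X ≫ ι X = 𝟙 (dob (dob X))
  ι_natural : ∀ {X Y : C} (f : X ⟶ Y), f ≫ ι Y = ι X ≫ dmap (dmap f)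
  ι_dagger : ∀ X : C, ι (dob X) ≫ dmap (ι X) = 𝟙 (dob X)

/-- A unitary structure on an involutive category: isomorphisms `φ_X : X → X†`
with `φ_{X†} = (φ_X⁻¹)†` and `φ_X ≫ φ_{X†} = ι_X`. -/
structure UnitaryStruct {C : Type u} [Category.{v} C] (D : Involutive C) where
  φ : ∀ X : C, X ⟶ D.dob X
  φinv : ∀ X : C, D.dob X ⟶ X
  φ_hom_inv : ∀ X : C, φ X ≫ φinv X = 𝟙 X
  φ_inv_hom : ∀ X : C, φinv X ≫ φ X = 𝟙 (D.dob X)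
  u1 : ∀ X : C, φ (D.dob X) = D.dmap (φinv X)
  u2 : ∀ X : C, φ X ≫ φ (D.dob X) = D.ι X

/-- An inner product combinator on an involutive category. -/
structure IPStruct {C : Type u} [Category.{v} C] (D : Involutive C) where
  ip : ∀ {A B X : C}, (A ⟶ X) → (B ⟶ X) → (A ⟶ D.dob B)

/-- The dual inner product `⟨h|k⟩^ι := ι_{A†} ≫ ⟨k†|h†⟩† ≫ ι_B⁻¹`. -/
def IPStruct.dual {C : Type u} [Category.{v} C] {D : Involutive C} (S : IPStruct D)
    {X A B : C} (h : X ⟶ A) (k : X ⟶ B) : D.dob A ⟶ B :=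
  D.ι (D.dob A) ≫ D.dmap (S.ip (D.dmap k) (D.dmap h)) ≫ D.ιinv B

/-- An inner product category: axioms [IP.1]–[IP.4]. -/
structure InnerProduct {C : Type u} [Category.{v} C] (D : Involutive C) extends IPStruct D where
  ip1 : ∀ {A B X Y Z : C} (f : A ⟶ X) (g : B ⟶ X) (h : Y ⟶ A) (k : Z ⟶ B),
    ip (h ≫ f) (k ≫ g) = h ≫ ip f g ≫ D.dmap k
  ip2a : ∀ {A B X : C} (f : A ⟶ X) (g : B ⟶ X),
    D.ι A ≫ toIPStruct.dual (D.dmap f) (D.dmap g) = ip f g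
  ip2b : ∀ {A B X : C} (f : A ⟶ X) (g : B ⟶ X),
    D.ι B ≫ D.dmap (ip f g) = ip g f
  ip3 : ∀ {A B X : C} (f : A ⟶ X) (g : B ⟶ X) (h k : X ⟶ B),
    h ≫ g = 𝟙 X → ip f g ≫ toIPStruct.dual h k = f ≫ k
  ip4 : ∀ {A X Z : C} (f : A ⟶ Z) (g : A ⟶ X) (h k : X ⟶ A),
    g ≫ h = 𝟙 A → toIPStruct.dual f g ≫ ip h k = D.dmap (k ≫ f)

/-- The inner product induced by a unitary structure: `⟨f|g⟩ := f ≫ φ_X ≫ g†`. -/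
def UnitaryStruct.uip {C : Type u} [Category.{v} C] {D : Involutive C} (U : UnitaryStruct D)
    {A B X : C} (f : A ⟶ X) (g : B ⟶ X) : A ⟶ D.dob B :=
  f ≫ U.φ X ≫ D.dmap g

/-- The dual inner product induced by a unitary structure. -/
def UnitaryStruct.udual {C : Type u} [Category.{v} C] {D : Involutive C} (U : UnitaryStruct D)
    {X A B : C} (h : X ⟶ A) (k : X ⟶ B) : D.dob A ⟶ B :=
  D.ι (D.dob A) ≫ D.dmap (U.uip (D.dmap k) (D.dmap h)) ≫ D.ιinv B

/-- The inner adjoint `f* := φ_B ≫ f† ≫ φ_A⁻¹` of `f : A ⟶ B`. -/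
def UnitaryStruct.adj {C : Type u} [Category.{v} C] {D : Involutive C} (U : UnitaryStruct D)
    {A B : C} (f : A ⟶ B) : B ⟶ A :=
  U.φ B ≫ D.dmap f ≫ U.φinv A

/-- An involutive functor `(F, γ)` between unitary (inner product) categories preserves
the inner product (`⟨F(f)|F(g)⟩ = F(⟨f|g⟩) ≫ γ_A` for all parallel `f, g : A → X`) if
and only if it is a unitary functor (`F(φ_X) ≫ γ_X = φ_{F(X)}` for all `X`). -/
theorem ip_preserving_iff_unitary_functor
    {C : Type u} [Category.{v} C] {E : Type u} [Category.{v} E]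
    (D₁ : Involutive C) (U₁ : UnitaryStruct D₁)
    (D₂ : Involutive E) (U₂ : UnitaryStruct D₂)
    (F : C ⥤ E)
    (γ : ∀ X : C, F.obj (D₁.dob X) ⟶ D₂.dob (F.obj X))
    (γiso : ∀ X : C, IsIso (γ X))
    (γnat : ∀ {X Y : C} (f : X ⟶ Y),
      F.map (D₁.dmap f) ≫ γ X = γ Y ≫ D₂.dmap (F.map f))
    (γcoh : ∀ X : C,
      F.map (D₁.ι X) ≫ γ (D₁.dob X) = D₂.ι (F.obj X) ≫ D₂.dmap (γ X)) :
    (∀ (A X : C) (f g : A ⟶ X),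
      U₂.uip (F.map f) (F.map g) = F.map (U₁.uip f g) ≫ γ A) ↔
    (∀ X : C, F.map (U₁.φ X) ≫ γ X = U₂.φ (F.obj X)) := by
  constructor
  · intro h X
    have := h X X (𝟙 X) (𝟙 X)
    simpa [UnitaryStruct.uip, D₁.dmap_id, D₂.dmap_id] using this.symm
  · intro h A X f g
    calc U₂.uip (F.map f) (F.map g)
        = F.map f ≫ (F.map (U₁.φ X) ≫ γ X) ≫ D₂.dmap (F.map g) := by
          rw [h X]; rfl
      _ = F.map f ≫ F.map (U₁.φ X) ≫ F.map (D₁.dmap g) ≫ γ A := by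
          rw [Category.assoc, ← γnat g]
      _ = F.map (U₁.uip f g) ≫ γ A := by
          simp [UnitaryStruct.uip]
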